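/- The operator L = (N-x)T⁺ + (x-N-α-1)I acts on the R_I Hahn polynomials by shifting parameters: L P_n(x; α, β, N) = -[(α+1)(1-β)/(1-β-n)] P_n(x; α+1, β-1, N), as polynomials in x. -/

import Mathlib

noncomputable def poch (a : ℝ) (n : ℕ) : ℝ := ∏ i ∈ Finset.range n, (a + i)

/-- The R_I polynomial of Hahn type P_n(x; α, β, N). -/
noncomputable def P (α β : ℝ) (N n : ℕ) (x : ℝ) : ℝ :=
  ∑ k ∈ Finset.range (n + 1),
    poch (-(n : ℝ)) k * poch (α + 1) k /
      ((Nat.factorial k : ℝ) * poch (-(N : ℝ)) k * poch (1 - β - n) k) * poch (-x) k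

lemma poch_zero (a : ℝ) : poch a 0 = 1 := by simp [poch]

lemma poch_succ (a : ℝ) (k : ℕ) : poch a (k+1) = poch a k * (a + k) :=
  Finset.prod_range_succ _ _

lemma poch_succ' (a : ℝ) (k : ℕ) : poch a (k+1) = a * poch (a+1) k := by
  rw [poch, Finset.prod_range_succ', mul_comm]
  simp only [Nat.cast_zero, add_zero]
  congr 1
  rw [poch]
  exact Finset.prod_congr rfl (fun i _ => by push_cast; ring)

lemma poch_shift (a : ℝ) (k : ℕ) : a * poch (a+1) k = poch a k * (a + k) := by
  rw [← poch_succ', poch_succ]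

noncomputable def coef (α β : ℝ) (N n k : ℕ) : ℝ :=
  poch (-(n : ℝ)) k * poch (α + 1) k /
      ((Nat.factorial k : ℝ) * poch (-(N : ℝ)) k * poch (1 - β - n) k)

lemma P_eq (α β : ℝ) (N n : ℕ) (x : ℝ) :
    P α β N n x = ∑ k ∈ Finset.range (n+1), coef α β N n k * poch (-x) k := rfl

lemma scalar1_aux (a b nr kr Nr p1 p2 p3 p4 q2 F : ℝ)
    (hq2 : a * q2 = p2 * (a + kr))
    (hF : F ≠ 0) (hp3 : p3 ≠ 0) (hp4 : p4 ≠ 0) (h1 : b ≠ 0)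
    (hb : b + kr ≠ 0) (hN : -Nr + kr ≠ 0) (hk1 : kr + 1 ≠ 0) :
    -(p1*p2/(F*p3*p4))*(a+kr)
      - (p1*(-nr+kr)*(p2*(a+kr))/(((kr+1)*F)*(p3*(-Nr+kr))*(p4*(b+kr)))) * ((kr+1)*(Nr-kr))
      = -(a*(b+nr)/b) * (p1*q2/(F*p3*(p4*(b+kr)/b))) := by
  field_simp
  linear_combination (-(p1 * (Nr - kr) * (b + nr))) * hq2

lemma scalar2_aux (a b nr p1 p2 p3 p4 q2 F : ℝ)
    (hq2 : a * q2 = p2 * (a + nr))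
    (hF : F ≠ 0) (hp3 : p3 ≠ 0) (hp4 : p4 ≠ 0) (h1 : b ≠ 0)
    (hbn : b + nr ≠ 0) :
    -(p1*p2/(F*p3*p4))*(a+nr)
      = -(a*(b+nr)/b) * (p1*q2/(F*p3*(p4*(b+nr)/b))) := by
  field_simp
  linear_combination p1 * hq2

lemma hq4_eq (β : ℝ) (n k : ℕ) (h1 : (1-β-(n:ℝ)) ≠ 0) :
    poch (1-(β-1)-(n:ℝ)) k = poch (1-β-(n:ℝ)) k * (1-β-(n:ℝ)+k) / (1-β-(n:ℝ)) := by
  rw [eq_div_iff h1, mul_comm (poch (1-(β-1)-(n:ℝ)) k) (1-β-(n:ℝ))]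
  have := poch_shift (1-β-(n:ℝ)) k
  rw [show (1-β-(n:ℝ))+1 = 1-(β-1)-(n:ℝ) by ring] at this
  exact this

lemma scalar1 (α β : ℝ) (N n k : ℕ)
    (hp3 : poch (-(N:ℝ)) k ≠ 0) (hp4 : poch (1-β-(n:ℝ)) k ≠ 0)
    (h1 : (1-β-(n:ℝ)) ≠ 0) (hb : (1-β-(n:ℝ)+(k:ℝ)) ≠ 0) (hN : (-(N:ℝ)+(k:ℝ)) ≠ 0) :
    -(coef α β N n k)*(α+1+(k:ℝ)) - coef α β N n (k+1) * (((k:ℝ)+1)*((N:ℝ)-(k:ℝ)))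
      = -((α+1)*(1-β)/(1-β-(n:ℝ))) * coef (α+1) (β-1) N n k := by
  have hF : (Nat.factorial k : ℝ) ≠ 0 := Nat.cast_ne_zero.mpr (Nat.factorial_ne_zero k)
  have hk1 : (k:ℝ) + 1 ≠ 0 := by positivity
  have aux := scalar1_aux (α+1) (1-β-(n:ℝ)) (n:ℝ) (k:ℝ) (N:ℝ)
    (poch (-(n:ℝ)) k) (poch (α+1) k) (poch (-(N:ℝ)) k) (poch (1-β-(n:ℝ)) k)
    (poch (α+1+1) k) (Nat.factorial k : ℝ)
    (poch_shift (α+1) k) hF hp3 hp4 h1 hb hN hk1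
  rw [coef, coef, coef, hq4_eq β n k h1, poch_succ, poch_succ, poch_succ, poch_succ,
    Nat.factorial_succ]
  push_cast
  linear_combination aux

lemma scalar2 (α β : ℝ) (N n : ℕ)
    (hp3 : poch (-(N:ℝ)) n ≠ 0) (hp4 : poch (1-β-(n:ℝ)) n ≠ 0)
    (h1 : (1-β-(n:ℝ)) ≠ 0) (hbn : (1-β:ℝ) ≠ 0) :
    -(coef α β N n n)*(α+1+(n:ℝ))
      = -((α+1)*(1-β)/(1-β-(n:ℝ))) * coef (α+1) (β-1) N n n := by
  have hF : (Nat.factorial n : ℝ) ≠ 0 := Nat.cast_ne_zero.mpr (Nat.factorial_ne_zero n)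
  have hbn' : (1-β-(n:ℝ)) + (n:ℝ) ≠ 0 := by
    intro h; apply hbn; linear_combination h
  have aux := scalar2_aux (α+1) (1-β-(n:ℝ)) (n:ℝ)
    (poch (-(n:ℝ)) n) (poch (α+1) n) (poch (-(N:ℝ)) n) (poch (1-β-(n:ℝ)) n)
    (poch (α+1+1) n) (Nat.factorial n : ℝ)
    (poch_shift (α+1) n) hF hp3 hp4 h1 hbn'
  rw [coef, coef, hq4_eq β n n h1]
  linear_combination aux

theorem stmt13 (N n : ℕ) (α β : ℝ) (hn : n ≤ N)
    (h1 : (1 - β - (n : ℝ)) ≠ 0)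
    (h2 : ∀ k ≤ n, poch (1 - β - (n : ℝ)) k ≠ 0)
    (h3 : ∀ k ≤ n, poch (1 - (β - 1) - (n : ℝ)) k ≠ 0)
    (h4 : ∀ k ≤ n, poch (-(N : ℝ)) k ≠ 0) :
    ∀ x : ℝ,
      ((N : ℝ) - x) * P α β N n (x + 1) + (x - N - α - 1) * P α β N n x
        = -((α + 1) * (1 - β) / (1 - β - (n : ℝ))) * P (α + 1) (β - 1) N n x := by
  -- first, 1 - β ≠ 0
  have hbn : (1 - β : ℝ) ≠ 0 := by
    cases n with
    | zero => simpa using h1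
    | succ m =>
      have := h3 (m+1) le_rfl
      rw [poch_succ] at this
      have := (mul_ne_zero_iff.mp this).2
      intro h; apply this
      push_cast
      linear_combination h
  intro x
  rw [P_eq, P_eq, P_eq, Finset.mul_sum, Finset.mul_sum, Finset.mul_sum,
    ← Finset.sum_add_distrib]
  have hL : ∑ k ∈ Finset.range (n+1),
      (((N:ℝ) - x) * (coef α β N n k * poch (-(x+1)) k)
        + (x - N - α - 1) * (coef α β N n k * poch (-x) k))
      = (∑ k ∈ Finset.range (n+1), (-(coef α β N n k)*(α+1+(k:ℝ))) * poch (-x) k)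
        + ∑ j ∈ Finset.range n,
            (-(coef α β N n (j+1)) * (((j:ℝ)+1)*((N:ℝ)-(j:ℝ)))) * poch (-x) j := by
    rw [Finset.sum_range_succ', Finset.sum_range_succ']
    have hterm : ∀ j ∈ Finset.range n,
        (((N:ℝ) - x) * (coef α β N n (j+1) * poch (-(x+1)) (j+1))
          + (x - N - α - 1) * (coef α β N n (j+1) * poch (-x) (j+1)))
        = (-(coef α β N n (j+1))*(α+1+((j:ℝ)+1))) * poch (-x) (j+1)
          + (-(coef α β N n (j+1)) * (((j:ℝ)+1)*((N:ℝ)-(j:ℝ)))) * poch (-x) j := by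
      intro j _
      rw [poch_succ' (-(x+1)) j, show (-(x+1)+1 : ℝ) = -x by ring, poch_succ (-x) j]
      ring
    rw [Finset.sum_congr rfl hterm, Finset.sum_add_distrib]
    simp only [poch_zero, Nat.cast_zero, Nat.cast_add, Nat.cast_one]
    ring
  rw [hL, Finset.sum_range_succ, Finset.sum_range_succ
    (fun k => -((α+1)*(1-β)/(1-β-(n:ℝ))) * (coef (α+1) (β-1) N n k * poch (-x) k))]
  have h_last : (-(coef α β N n n)*(α+1+(n:ℝ))) * poch (-x) n
      = -((α+1)*(1-β)/(1-β-(n:ℝ))) * (coef (α+1) (β-1) N n n * poch (-x) n) := by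
    have := scalar2 α β N n (h4 n le_rfl) (h2 n le_rfl) h1 hbn
    linear_combination (poch (-x) n) * this
  have h_rest : (∑ k ∈ Finset.range n, (-(coef α β N n k)*(α+1+(k:ℝ))) * poch (-x) k)
      + ∑ j ∈ Finset.range n, (-(coef α β N n (j+1)) * (((j:ℝ)+1)*((N:ℝ)-(j:ℝ)))) * poch (-x) j
      = ∑ k ∈ Finset.range n,
          -((α+1)*(1-β)/(1-β-(n:ℝ))) * (coef (α+1) (β-1) N n k * poch (-x) k) := by
    rw [← Finset.sum_add_distrib]
    refine Finset.sum_congr rfl (fun k hk => ?_)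
    have hkn : k < n := Finset.mem_range.mp hk
    have hb' : (1-β-(n:ℝ)+(k:ℝ)) ≠ 0 := by
      have := h2 (k+1) hkn
      rw [poch_succ] at this
      exact (mul_ne_zero_iff.mp this).2
    have hN' : (-(N:ℝ)+(k:ℝ)) ≠ 0 := by
      have := h4 (k+1) hkn
      rw [poch_succ] at this
      exact (mul_ne_zero_iff.mp this).2
    have := scalar1 α β N n k (h4 k hkn.le) (h2 k hkn.le) h1 hb' hN'
    linear_combination (poch (-x) k) * this
  linear_combination h_rest + h_last
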